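/- arXiv:1710.08497 — 3 statements merged into one kernel-verified Lean document; each statement's English description precedes it below -/
import Mathlib

section
/- For all a, b > 0 and 0 ≤ t ≤ 1, the Heinz mean satisfies H_t(a,b) ≤ K_{α(t)}(a,b), where α(t) = 1 - 4t(1-t). -/
lemma sinh_mul_le_aux {l w : ℝ} (hl0 : 0 ≤ l) (hl1 : l ≤ 1) (hw : 0 ≤ w) :
    Real.sinh (l * w) ≤ l * Real.sinh w := by
  refine hasSum_le (fun n => ?_) (Real.hasSum_sinh (l * w))
    ((Real.hasSum_sinh w).mul_left l)
  rw [mul_pow, ← mul_div_assoc]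
  have h1 : l ^ (2 * n + 1) ≤ l := pow_le_of_le_one hl0 hl1 (by omega)
  have h2 : (0:ℝ) < ((2 * n + 1).factorial : ℝ) := by positivity
  have h3 : (0:ℝ) ≤ w ^ (2 * n + 1) := by positivity
  exact (div_le_div_iff_of_pos_right h2).mpr (mul_le_mul_of_nonneg_right h1 h3)

lemma cosh_key {l d : ℝ} (hl : |l| ≤ 1) :
    Real.cosh (l * d) ≤ (1 - l ^ 2) + l ^ 2 * Real.cosh d := by
  have habs : |l * d / 2| = |l| * (|d| / 2) := by
    rw [abs_div, abs_mul]; simp [abs_of_nonneg]; ring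
  have h := sinh_mul_le_aux (abs_nonneg l) hl (by positivity : (0:ℝ) ≤ |d| / 2)
  have hs1 : 0 ≤ Real.sinh (|l| * (|d| / 2)) := Real.sinh_nonneg_iff.mpr (by positivity)
  have hs2 : 0 ≤ Real.sinh (|d| / 2) := Real.sinh_nonneg_iff.mpr (by positivity)
  have hsq : Real.sinh (|l| * (|d| / 2)) ^ 2 ≤ |l| ^ 2 * Real.sinh (|d| / 2) ^ 2 := by
    rw [← mul_pow]; exact pow_le_pow_left₀ hs1 h 2
  have e1 : Real.sinh (|l| * (|d| / 2)) ^ 2 = Real.sinh (l * d / 2) ^ 2 := by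
    rw [← habs]
    rcases abs_cases (l * d / 2) with ⟨h', _⟩ | ⟨h', _⟩ <;> rw [h'] <;>
      simp [Real.sinh_neg]
  have e2 : Real.sinh (|d| / 2) ^ 2 = Real.sinh (d / 2) ^ 2 := by
    rcases abs_cases d with ⟨h', _⟩ | ⟨h', _⟩ <;> rw [h'] <;>
      simp [neg_div, Real.sinh_neg]
  have key : Real.sinh (l * d / 2) ^ 2 ≤ l ^ 2 * Real.sinh (d / 2) ^ 2 := by
    rw [← e1, ← e2]; simpa [sq_abs] using hsq
  have c1 : Real.cosh (l * d) = 1 + 2 * Real.sinh (l * d / 2) ^ 2 := by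
    have := Real.cosh_sq (l * d / 2)
    have h2 := Real.cosh_two_mul (l * d / 2)
    rw [show 2 * (l * d / 2) = l * d by ring] at h2
    nlinarith
  have c2 : Real.cosh d = 1 + 2 * Real.sinh (d / 2) ^ 2 := by
    have := Real.cosh_sq (d / 2)
    have h2 := Real.cosh_two_mul (d / 2)
    rw [show 2 * (d / 2) = d by ring] at h2
    nlinarith
  nlinarith

theorem heinz_le_heron (a b t : ℝ) (ha : 0 < a) (hb : 0 < b)
    (ht0 : 0 ≤ t) (ht1 : t ≤ 1) :
    (a ^ t * b ^ (1 - t) + a ^ (1 - t) * b ^ t) / 2 ≤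
      (1 - (1 - 4 * t * (1 - t))) * Real.sqrt (a * b)
        + (1 - 4 * t * (1 - t)) * ((a + b) / 2) := by
  set p := Real.log a with hp
  set q := Real.log b with hq
  set m := (p + q) / 2 with hm
  set d := (p - q) / 2 with hd
  set l := 2 * t - 1 with hl
  have ea : a = Real.exp p := (Real.exp_log ha).symm
  have eb : b = Real.exp q := (Real.exp_log hb).symm
  have h1 : a ^ t * b ^ (1 - t) = Real.exp (m + l * d) := by
    rw [Real.rpow_def_of_pos ha, Real.rpow_def_of_pos hb, ← Real.exp_add, ← hp, ← hq]
    congr 1; rw [hm, hd, hl]; ring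
  have h2 : a ^ (1 - t) * b ^ t = Real.exp (m - l * d) := by
    rw [Real.rpow_def_of_pos ha, Real.rpow_def_of_pos hb, ← Real.exp_add, ← hp, ← hq]
    congr 1; rw [hm, hd, hl]; ring
  have h3 : Real.sqrt (a * b) = Real.exp m := by
    rw [ea, eb, ← Real.exp_add]
    rw [show p + q = m + m by rw [hm]; ring, Real.exp_add, ← sq,
      Real.sqrt_sq (Real.exp_nonneg m)]
  have h4 : a + b = Real.exp m * (2 * Real.cosh d) := by
    rw [ea, eb, Real.cosh_eq, show q = m - d by rw [hm, hd]; ring,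
      show p = m + d by rw [hm, hd]; ring, Real.exp_add, Real.exp_sub, Real.exp_neg]
    have := Real.exp_pos d
    field_simp
  have hlabs : |l| ≤ 1 := by rw [hl, abs_le]; constructor <;> linarith
  have hck := cosh_key (d := d) hlabs
  have hcl : Real.exp (m + l * d) + Real.exp (m - l * d)
      = Real.exp m * (2 * Real.cosh (l * d)) := by
    rw [Real.cosh_eq, Real.exp_add, Real.exp_sub, Real.exp_neg]
    field_simp
  rw [h1, h2, h3, hcl, h4]
  have hlsq : 1 - 4 * t * (1 - t) = l ^ 2 := by rw [hl]; ring
  rw [hlsq]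
  have hem : 0 < Real.exp m := Real.exp_pos m
  nlinarith [Real.exp_pos m]
end

section
/- For all a, b > 0 and 0 ≤ t ≤ 1, one has (a^t b^{1-t} + a^{1-t} b^t) + t(1-t)(b-a) log(b/a) ≥ a + b. -/
open Real

lemma sinh_le_mul_cosh {x : ℝ} (hx : 0 ≤ x) : Real.sinh x ≤ x * Real.cosh x := by
  have mono : MonotoneOn (fun y => y * Real.cosh y - Real.sinh y) (Set.Ici 0) := by
    apply monotoneOn_of_deriv_nonneg (convex_Ici 0)
    · fun_prop
    · fun_prop
    · intro y hy
      rw [interior_Ici] at hy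
      have hy' : (0:ℝ) ≤ y := le_of_lt hy
      have hd : HasDerivAt (fun y => y * Real.cosh y - Real.sinh y) (y * Real.sinh y) y := by
        have := ((hasDerivAt_id y).mul (Real.hasDerivAt_cosh y)).sub (Real.hasDerivAt_sinh y)
        convert this using 1
        · rfl
        · rfl
        · funext z; simp
        · simp
      rw [hd.deriv]
      have hs : (0:ℝ) ≤ Real.sinh y := by positivity
      positivity
  have := mono (Set.self_mem_Ici) (Set.mem_Ici.mpr hx) hx
  simp at this
  linarith

lemma key2 {x y : ℝ} (hx : 0 ≤ x) (hy : 0 ≤ y) :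
    (x + y) * (Real.sinh x * Real.sinh y) ≤ x * y * Real.sinh (x + y) := by
  rw [Real.sinh_add]
  have h1 := sinh_le_mul_cosh hx
  have h2 := sinh_le_mul_cosh hy
  have s1 : (0:ℝ) ≤ Real.sinh x := by positivity
  have s2 : (0:ℝ) ≤ Real.sinh y := by positivity
  nlinarith [mul_le_mul_of_nonneg_left h2 (mul_nonneg hx s1),
             mul_le_mul_of_nonneg_left h1 (mul_nonneg hy s2)]

lemma exp_sub_one_eq {u : ℝ} : Real.exp u - 1 = 2 * Real.exp (u/2) * Real.sinh (u/2) := by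
  rw [Real.sinh_eq]
  rw [show -(u/2) = 0 - u/2 by ring, Real.exp_sub, Real.exp_zero]
  have h : Real.exp (u/2) * Real.exp (u/2) = Real.exp u := by
    rw [← Real.exp_add]; ring_nf
  have hp := Real.exp_pos (u/2)
  field_simp
  nlinarith [h]

lemma key3 {u v : ℝ} (hu : 0 ≤ u) (hv : 0 ≤ v) :
    (u + v) * ((Real.exp u - 1) * (Real.exp v - 1)) ≤ u * v * (Real.exp (u + v) - 1) := by
  have e1 : Real.exp u - 1 = 2 * Real.exp (u/2) * Real.sinh (u/2) := exp_sub_one_eq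
  have e2 : Real.exp v - 1 = 2 * Real.exp (v/2) * Real.sinh (v/2) := exp_sub_one_eq
  have e3 : Real.exp (u+v) - 1 = 2 * Real.exp ((u+v)/2) * Real.sinh ((u+v)/2) := exp_sub_one_eq
  have hsum : Real.exp (u/2) * Real.exp (v/2) = Real.exp ((u+v)/2) := by
    rw [← Real.exp_add]; ring_nf
  have hk := key2 (by linarith : (0:ℝ) ≤ u/2) (by linarith : (0:ℝ) ≤ v/2)
  rw [show u/2 + v/2 = (u+v)/2 by ring] at hk
  have hep : (0:ℝ) < Real.exp ((u+v)/2) := Real.exp_pos _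
  rw [e1, e2, e3]
  calc (u + v) * (2 * Real.exp (u/2) * Real.sinh (u/2) * (2 * Real.exp (v/2) * Real.sinh (v/2)))
      = 4 * Real.exp ((u+v)/2) * ((u+v) * (Real.sinh (u/2) * Real.sinh (v/2))) := by
        rw [← hsum]; ring
    _ = 8 * Real.exp ((u+v)/2) * ((u+v)/2 * (Real.sinh (u/2) * Real.sinh (v/2))) := by ring
    _ ≤ 8 * Real.exp ((u+v)/2) * (u/2 * (v/2) * Real.sinh ((u+v)/2)) := by
        apply mul_le_mul_of_nonneg_left hk (by positivity)
    _ = u * v * (2 * Real.exp ((u+v)/2) * Real.sinh ((u+v)/2)) := by ring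

lemma aux_heinz (a b t : ℝ) (ha : 0 < a) (hb : 0 < b)
    (ht0 : 0 ≤ t) (ht1 : t ≤ 1) (hab : a ≤ b) :
    a + b ≤ (a ^ t * b ^ (1 - t) + a ^ (1 - t) * b ^ t)
      + t * (1 - t) * (b - a) * Real.log (b / a) := by
  set p := Real.log a with hp
  set q := Real.log b with hq
  have hpq : p ≤ q := Real.log_le_log ha hab
  have hea : Real.exp p = a := Real.exp_log ha
  have heb : Real.exp q = b := Real.exp_log hb
  have hlog : Real.log (b/a) = q - p := Real.log_div hb.ne' ha.ne'
  set u := t * (q - p) with hu'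
  set v := (1 - t) * (q - p) with hv'
  have hd : 0 ≤ q - p := by linarith
  have hu : 0 ≤ u := mul_nonneg ht0 hd
  have hv : 0 ≤ v := mul_nonneg (by linarith) hd
  have huv : u + v = q - p := by rw [hu', hv']; ring
  have hexp : Real.exp (u + v) = Real.exp u * Real.exp v := Real.exp_add u v
  have core : 1 + Real.exp (u+v) ≤ Real.exp v + Real.exp u
      + t*(1-t)*(Real.exp (u+v) - 1)*(q-p) := by
    rcases eq_or_lt_of_le hd with h|h
    · have hu0 : u = 0 := by rw [hu', ← h]; ring
      have hv0 : v = 0 := by rw [hv', ← h]; ring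
      rw [hu0, hv0, ← h]
      norm_num
    · have hk := key3 hu hv
      rw [hexp, huv] at hk
      have huv2 : u * v = t*(1-t)*(q-p)^2 := by rw [hu', hv']; ring
      rw [huv2] at hk
      rw [hexp]
      nlinarith [hk, h, mul_pos h h]
  have E1 : a ^ t * b ^ (1-t) = Real.exp p * Real.exp v := by
    rw [Real.rpow_def_of_pos ha, Real.rpow_def_of_pos hb, ← hp, ← hq, ← Real.exp_add,
      ← Real.exp_add]
    congr 1
    rw [hv']; ring
  have E2 : a ^ (1-t) * b ^ t = Real.exp p * Real.exp u := by
    rw [Real.rpow_def_of_pos ha, Real.rpow_def_of_pos hb, ← hp, ← hq, ← Real.exp_add,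
      ← Real.exp_add]
    congr 1
    rw [hu']; ring
  have E3 : b = Real.exp p * Real.exp (u + v) := by
    rw [← Real.exp_add, huv]
    rw [show p + (q - p) = q by ring, heb]
  calc a + b = Real.exp p * (1 + Real.exp (u+v)) := by rw [← hea, E3]; ring
    _ ≤ Real.exp p * (Real.exp v + Real.exp u + t*(1-t)*(Real.exp (u+v) - 1)*(q-p)) :=
        mul_le_mul_of_nonneg_left core (Real.exp_pos p).le
    _ = (a ^ t * b ^ (1-t) + a ^ (1-t) * b ^ t)
        + t * (1 - t) * (b - a) * Real.log (b / a) := by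
        rw [E1, E2, hlog, E3, ← hea]; ring

theorem log_reverse_heinz (a b t : ℝ) (ha : 0 < a) (hb : 0 < b)
    (ht0 : 0 ≤ t) (ht1 : t ≤ 1) :
    a + b ≤ (a ^ t * b ^ (1 - t) + a ^ (1 - t) * b ^ t)
      + t * (1 - t) * (b - a) * Real.log (b / a) := by
  rcases le_total a b with hab | hab
  · exact aux_heinz a b t ha hb ht0 ht1 hab
  · have h := aux_heinz b a t hb ha ht0 ht1 hab
    have hl : Real.log (a/b) = Real.log a - Real.log b := Real.log_div ha.ne' hb.ne'
    have hl2 : Real.log (b/a) = Real.log b - Real.log a := Real.log_div hb.ne' ha.ne'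
    rw [hl] at h
    rw [hl2]
    nlinarith [h]
end

section
/- Let A, B be n×n positive definite complex matrices and τ, ν ∈ (0,1) with ν ≤ min{τ,1-τ} or ν ≥ max{τ,1-τ}. Then det(A+B)^{1/n} ≥ det(A#_ν B + A#_{1-ν} B)^{1/n} + (ν(1-ν)/(τ(1-τ))) · det(A + B - (A#_τ B + A#_{1-τ} B))^{1/n}. -/
open Matrix ComplexOrder

/-- Real power of a matrix, defined via the spectral decomposition when the
matrix is Hermitian (and junk value `0` otherwise). -/
noncomputable def mpow {n : ℕ} (A : Matrix (Fin n) (Fin n) ℂ) (t : ℝ) :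
    Matrix (Fin n) (Fin n) ℂ :=
  if hA : A.IsHermitian then
    (hA.eigenvectorUnitary : Matrix (Fin n) (Fin n) ℂ) *
      Matrix.diagonal (fun i => ((hA.eigenvalues i ^ t : ℝ) : ℂ)) *
      (star hA.eigenvectorUnitary : Matrix (Fin n) (Fin n) ℂ)
  else 0

/-- The weighted matrix geometric mean `A #_t B = A^{1/2} (A^{-1/2} B A^{-1/2})^t A^{1/2}`. -/
noncomputable def geoMean {n : ℕ} (A B : Matrix (Fin n) (Fin n) ℂ) (t : ℝ) :
    Matrix (Fin n) (Fin n) ℂ :=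
  mpow A (1/2) * mpow (mpow A (-(1/2)) * B * mpow A (-(1/2))) t * mpow A (1/2)

section AuxiliaryLemmas
open Real

open Real

lemma key_term (k : ℕ) {p q : ℝ} (h0p : 0 ≤ p) (hpq : p ≤ q) (hq : q < 1) :
    (1 - q) * (1 - p ^ k) ≤ (1 - p) * (1 - q ^ k) := by
  have e : ∀ r : ℝ, 1 - r ^ k = (1 - r) * ∑ j ∈ Finset.range k, r ^ j := by
    intro r
    have := geom_sum_mul r k
    linarith [this]
  rw [e p, e q, show (1-q)*((1-p)*∑ j ∈ Finset.range k, p ^ j)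
      = ((1-p)*(1-q)) * ∑ j ∈ Finset.range k, p ^ j by ring,
    show (1-p)*((1-q)*∑ j ∈ Finset.range k, q ^ j)
      = ((1-p)*(1-q)) * ∑ j ∈ Finset.range k, q ^ j by ring]
  apply mul_le_mul_of_nonneg_left
  · exact Finset.sum_le_sum fun j _ => pow_le_pow_left₀ h0p hpq j
  · have : p < 1 := lt_of_le_of_lt hpq hq
    nlinarith

lemma cosh_ineq (u : ℝ) {s t : ℝ} (hst : s^2 ≤ t^2) (ht : t^2 < 1) :
    (1 - t^2) * (Real.cosh u - Real.cosh (s*u)) ≤ (1 - s^2) * (Real.cosh u - Real.cosh (t*u)) := by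
  have hs := Real.hasSum_cosh (s*u)
  have ht' := Real.hasSum_cosh (t*u)
  have hu := Real.hasSum_cosh u
  have hL : HasSum (fun k => (1 - t^2) * ((u ^ (2*k) - (s*u)^(2*k)) / (Nat.factorial (2*k) : ℝ)))
      ((1 - t^2) * (Real.cosh u - Real.cosh (s*u))) := by
    refine HasSum.mul_left _ ?_
    simpa [sub_div] using hu.sub hs
  have hR : HasSum (fun k => (1 - s^2) * ((u ^ (2*k) - (t*u)^(2*k)) / (Nat.factorial (2*k) : ℝ)))
      ((1 - s^2) * (Real.cosh u - Real.cosh (t*u))) := by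
    refine HasSum.mul_left _ ?_
    simpa [sub_div] using hu.sub ht'
  refine hasSum_le (fun k => ?_) hL hR
  have hfac : (0:ℝ) ≤ (u^2)^k / (Nat.factorial (2*k) : ℝ) :=
    div_nonneg (pow_nonneg (sq_nonneg u) k) (by positivity)
  have e1 : u ^ (2*k) - (s*u)^(2*k) = (u^2)^k * (1 - (s^2)^k) := by
    rw [mul_pow]
    ring_nf
  have e2 : u ^ (2*k) - (t*u)^(2*k) = (u^2)^k * (1 - (t^2)^k) := by
    rw [mul_pow]
    ring_nf
  rw [e1, e2]
  have := key_term k (sq_nonneg s) hst ht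
  calc (1 - t^2) * ((u^2)^k * (1 - (s^2)^k) / (Nat.factorial (2*k) : ℝ))
      = ((u^2)^k / (Nat.factorial (2*k) : ℝ)) * ((1 - t^2) * (1 - (s^2)^k)) := by ring
    _ ≤ ((u^2)^k / (Nat.factorial (2*k) : ℝ)) * ((1 - s^2) * (1 - (t^2)^k)) :=
        mul_le_mul_of_nonneg_left this hfac
    _ = (1 - s^2) * ((u^2)^k * (1 - (t^2)^k) / (Nat.factorial (2*k) : ℝ)) := by ring
open Real

lemma f_eq {x : ℝ} (hx : 0 < x) (t : ℝ) :
    (x ^ t - 1) * (x ^ (1 - t) - 1)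
      = 2 * Real.exp (Real.log x / 2)
        * (Real.cosh (Real.log x / 2) - Real.cosh ((1 - 2*t) * (Real.log x / 2))) := by
  set u := Real.log x / 2 with hu
  have hx1 : x ^ t = Real.exp (t * (2*u)) := by
    rw [Real.rpow_def_of_pos hx]; congr 1; rw [hu]; ring
  have hx2 : x ^ (1-t) = Real.exp ((1-t) * (2*u)) := by
    rw [Real.rpow_def_of_pos hx]; congr 1; rw [hu]; ring
  rw [hx1, hx2, Real.cosh_eq, Real.cosh_eq]
  have h1 : Real.exp (t*(2*u)) * Real.exp ((1-t)*(2*u)) = Real.exp u * Real.exp u := by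
    rw [← Real.exp_add, ← Real.exp_add]; ring_nf
  have h3 : Real.exp u * Real.exp (-u) = 1 := by
    rw [← Real.exp_add]; simp
  have h4 : Real.exp u * Real.exp ((1-2*t)*u) = Real.exp ((1-t)*(2*u)) := by
    rw [← Real.exp_add]; ring_nf
  have h5 : Real.exp u * Real.exp (-((1-2*t)*u)) = Real.exp (t*(2*u)) := by
    rw [← Real.exp_add]; ring_nf
  linear_combination h1 - h3 + h4 + h5

lemma sq_cond {τ ν : ℝ} (hτ : τ ∈ Set.Ioo (0:ℝ) 1) (hν : ν ∈ Set.Ioo (0:ℝ) 1)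
    (h : ν ≤ min τ (1 - τ) ∨ max τ (1 - τ) ≤ ν) : (1 - 2*τ)^2 ≤ (1 - 2*ν)^2 := by
  rcases h with h | h
  · rw [le_min_iff] at h
    nlinarith [h.1, h.2]
  · rw [max_le_iff] at h
    nlinarith [h.1, h.2]

/-- The scalar quadratic Heinz inequality. -/
lemma scalar_heinz {x : ℝ} (hx : 0 < x) {τ ν : ℝ} (hτ : τ ∈ Set.Ioo (0:ℝ) 1)
    (hν : ν ∈ Set.Ioo (0:ℝ) 1) (hsq : (1 - 2*τ)^2 ≤ (1 - 2*ν)^2) :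
    ν * (1-ν) * ((x ^ τ - 1) * (x ^ (1-τ) - 1))
      ≤ τ * (1-τ) * ((x ^ ν - 1) * (x ^ (1-ν) - 1)) := by
  set u := Real.log x / 2
  have hν2 : (1 - 2*ν)^2 < 1 := by nlinarith [hν.1, hν.2]
  have key := cosh_ineq u hsq hν2
  rw [f_eq hx τ, f_eq hx ν]
  have e1 : ν * (1-ν) * (2 * Real.exp u * (Real.cosh u - Real.cosh ((1-2*τ)*u)))
      = (Real.exp u / 2) * ((1 - (1-2*ν)^2) * (Real.cosh u - Real.cosh ((1-2*τ)*u))) := by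
    ring
  have e2 : τ * (1-τ) * (2 * Real.exp u * (Real.cosh u - Real.cosh ((1-2*ν)*u)))
      = (Real.exp u / 2) * ((1 - (1-2*τ)^2) * (Real.cosh u - Real.cosh ((1-2*ν)*u))) := by
    ring
  rw [e1, e2]
  exact mul_le_mul_of_nonneg_left key (by positivity)



section mp
variable {n : ℕ} {A : Matrix (Fin n) (Fin n) ℂ}

lemma mpow_eq (hA : A.IsHermitian) (t : ℝ) :
    mpow A t = (hA.eigenvectorUnitary : Matrix (Fin n) (Fin n) ℂ) *
      Matrix.diagonal (fun i => ((hA.eigenvalues i ^ t : ℝ) : ℂ)) *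
      (star hA.eigenvectorUnitary : Matrix (Fin n) (Fin n) ℂ) := dif_pos hA

lemma mpow_isHermitian (hA : A.IsHermitian) (t : ℝ) : (mpow A t).IsHermitian := by
  rw [mpow_eq hA t]
  have hD : (Matrix.diagonal (fun i => ((hA.eigenvalues i ^ t : ℝ) : ℂ)))ᴴ
      = Matrix.diagonal (fun i => ((hA.eigenvalues i ^ t : ℝ) : ℂ)) := by
    rw [diagonal_conjTranspose,
      show (star fun i => ((hA.eigenvalues i ^ t : ℝ) : ℂ))
          = fun i => ((hA.eigenvalues i ^ t : ℝ) : ℂ) from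
        funext fun i => Complex.conj_ofReal _]
  show _ᴴ = _
  rw [conjTranspose_mul, conjTranspose_mul, hD]
  rw [show ((star hA.eigenvectorUnitary : Matrix (Fin n) (Fin n) ℂ))ᴴ
      = (hA.eigenvectorUnitary : Matrix (Fin n) (Fin n) ℂ) by
    rw [star_eq_conjTranspose, conjTranspose_conjTranspose],
    show ((hA.eigenvectorUnitary : Matrix (Fin n) (Fin n) ℂ))ᴴ
      = (star hA.eigenvectorUnitary : Matrix (Fin n) (Fin n) ℂ) from rfl]
  rw [mul_assoc]

lemma mpow_mul_mpow (hA : A.PosDef) (s t : ℝ) :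
    mpow A s * mpow A t = mpow A (s + t) := by
  rw [mpow_eq hA.1, mpow_eq hA.1, mpow_eq hA.1]
  have hU : (star (hA.1.eigenvectorUnitary : Matrix (Fin n) (Fin n) ℂ))
      * (hA.1.eigenvectorUnitary : Matrix (Fin n) (Fin n) ℂ) = 1 :=
    mem_unitaryGroup_iff'.mp hA.1.eigenvectorUnitary.2
  calc _ = (hA.1.eigenvectorUnitary : Matrix (Fin n) (Fin n) ℂ) *
      (Matrix.diagonal (fun i => ((hA.1.eigenvalues i ^ s : ℝ) : ℂ)) *
        Matrix.diagonal (fun i => ((hA.1.eigenvalues i ^ t : ℝ) : ℂ))) *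
      (star hA.1.eigenvectorUnitary : Matrix (Fin n) (Fin n) ℂ) := by
        simp only [mul_assoc]
        rw [← mul_assoc (star (hA.1.eigenvectorUnitary : Matrix (Fin n) (Fin n) ℂ)), hU, one_mul]
    _ = _ := by
        rw [diagonal_mul_diagonal]
        have he : (fun i => ((hA.1.eigenvalues i ^ s : ℝ) : ℂ) * ((hA.1.eigenvalues i ^ t : ℝ) : ℂ))
            = fun i => ((hA.1.eigenvalues i ^ (s + t) : ℝ) : ℂ) := funext fun i => by
          rw [← Complex.ofReal_mul, ← Real.rpow_add (hA.eigenvalues_pos i)]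
        rw [he]

lemma mpow_zero (hA : A.IsHermitian) : mpow A 0 = 1 := by
  rw [mpow_eq hA]
  simp only [Real.rpow_zero, Complex.ofReal_one, diagonal_one, mul_one]
  exact mem_unitaryGroup_iff.mp hA.eigenvectorUnitary.2

lemma mpow_one (hA : A.IsHermitian) : mpow A 1 = A := by
  rw [mpow_eq hA]
  simp only [Real.rpow_one]
  exact hA.spectral_theorem.symm

lemma posDef_conj {B T : Matrix (Fin n) (Fin n) ℂ} (hB : B.PosDef) (hT : IsUnit T) :
    (Tᴴ * B * T).PosDef := by
  rw [posDef_iff_dotProduct_mulVec]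
  constructor
  · exact Matrix.isHermitian_conjTranspose_mul_mul T hB.1
  · intro x hx
    have hTx : T *ᵥ x ≠ 0 :=
      (Matrix.mulVec_injective_iff_isUnit.mpr hT |>.ne_iff' (by simp)).2 hx
    simpa only [star_mulVec, dotProduct_mulVec, vecMul_vecMul] using hB.dotProduct_mulVec_pos hTx

end mp

lemma geom_superadd {n : ℕ} (hn : 0 < n) (a b : Fin n → ℝ)
    (ha : ∀ i, 0 ≤ a i) (hb : ∀ i, 0 ≤ b i) :
    (∏ i, a i) ^ ((1:ℝ)/n) + (∏ i, b i) ^ ((1:ℝ)/n)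
      ≤ (∏ i, (a i + b i)) ^ ((1:ℝ)/n) := by
  have hn' : (0:ℝ) < n := by exact_mod_cast hn
  by_cases hz : ∃ i, a i + b i = 0
  · obtain ⟨i, hi⟩ := hz
    have hai : a i = 0 := by linarith [ha i, hb i]
    have hbi : b i = 0 := by linarith [ha i, hb i]
    rw [Finset.prod_eq_zero (Finset.mem_univ i) hai,
      Finset.prod_eq_zero (Finset.mem_univ i) hbi,
      Real.zero_rpow (by positivity)]
    have : (0:ℝ) ≤ (∏ i, (a i + b i)) ^ ((1:ℝ)/n) :=
      Real.rpow_nonneg (Finset.prod_nonneg fun i _ => add_nonneg (ha i) (hb i)) _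
    linarith
  · push_neg at hz
    have hc : ∀ i, 0 < a i + b i := fun i =>
      lt_of_le_of_ne (add_nonneg (ha i) (hb i)) (Ne.symm (hz i))
    have hP : 0 < ∏ i, (a i + b i) := Finset.prod_pos fun i _ => hc i
    have key : ∀ f : Fin n → ℝ, (∀ i, 0 ≤ f i) →
        (∏ i, f i) ^ ((1:ℝ)/n)
          ≤ (∏ i, (a i + b i)) ^ ((1:ℝ)/n) * ∑ i, (1:ℝ)/n * (f i / (a i + b i)) := by
      intro f hf
      have hgm := Real.geom_mean_le_arith_mean_weighted Finset.univ
        (fun _ => (1:ℝ)/n) (fun i => f i / (a i + b i))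
        (fun i _ => le_of_lt (by positivity))
        (by simp only [Finset.sum_const, Finset.card_univ, Fintype.card_fin, nsmul_eq_mul]
            field_simp)
        (fun i _ => div_nonneg (hf i) (hc i).le)
      have hfeq : (∏ i, f i) = (∏ i, (a i + b i)) * ∏ i, (f i / (a i + b i)) := by
        rw [← Finset.prod_mul_distrib]
        exact Finset.prod_congr rfl fun i _ => by
          rw [← mul_div_assoc, mul_div_cancel_left₀ _ (hz i)]
      calc (∏ i, f i) ^ ((1:ℝ)/n)
          = (∏ i, (a i + b i)) ^ ((1:ℝ)/n) * (∏ i, (f i / (a i + b i))) ^ ((1:ℝ)/n) := by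
            rw [hfeq, Real.mul_rpow hP.le
              (Finset.prod_nonneg fun i _ => div_nonneg (hf i) (hc i).le)]
        _ = (∏ i, (a i + b i)) ^ ((1:ℝ)/n) * ∏ i, (f i / (a i + b i)) ^ ((1:ℝ)/n) := by
            rw [Real.finset_prod_rpow _ _ (fun i _ => div_nonneg (hf i) (hc i).le)]
        _ ≤ (∏ i, (a i + b i)) ^ ((1:ℝ)/n) * ∑ i, (1:ℝ)/n * (f i / (a i + b i)) := by
            refine mul_le_mul_of_nonneg_left ?_ (Real.rpow_nonneg hP.le _)
            exact hgm
    have hsum : (∑ i, (1:ℝ)/n * (a i / (a i + b i)))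
        + (∑ i, (1:ℝ)/n * (b i / (a i + b i))) = 1 := by
      rw [← Finset.sum_add_distrib]
      have he : ∀ i : Fin n, (1:ℝ)/n * (a i / (a i + b i)) + (1:ℝ)/n * (b i / (a i + b i))
          = (1:ℝ)/n := fun i => by
        rw [← mul_add, ← add_div, div_self (hz i), mul_one]
      rw [Finset.sum_congr rfl fun i _ => he i]
      simp only [Finset.sum_const, Finset.card_univ, Fintype.card_fin, nsmul_eq_mul]
      field_simp
    calc (∏ i, a i) ^ ((1:ℝ)/n) + (∏ i, b i) ^ ((1:ℝ)/n)
        ≤ (∏ i, (a i + b i)) ^ ((1:ℝ)/n) * ∑ i, (1:ℝ)/n * (a i / (a i + b i))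
          + (∏ i, (a i + b i)) ^ ((1:ℝ)/n) * ∑ i, (1:ℝ)/n * (b i / (a i + b i)) :=
          add_le_add (key a ha) (key b hb)
      _ = (∏ i, (a i + b i)) ^ ((1:ℝ)/n) := by rw [← mul_add, hsum, mul_one]

section aux2

lemma f_nonneg {x : ℝ} (hx : 0 < x) {t : ℝ} (h0 : 0 ≤ t) (h1 : t ≤ 1) :
    0 ≤ 1 + x - (x ^ t + x ^ (1 - t)) := by
  have hmul : x ^ t * x ^ (1 - t) = x := by
    rw [← Real.rpow_add hx]; norm_num
  have hkey : 0 ≤ (x ^ t - 1) * (x ^ (1 - t) - 1) := by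
    rcases le_total 1 x with hx1 | hx1
    · have h1t : (1:ℝ) ≤ x ^ t := by
        calc (1:ℝ) = 1 ^ t := (Real.one_rpow t).symm
          _ ≤ x ^ t := Real.rpow_le_rpow zero_le_one hx1 h0
      have h2t : (1:ℝ) ≤ x ^ (1 - t) := by
        calc (1:ℝ) = 1 ^ (1 - t) := (Real.one_rpow _).symm
          _ ≤ x ^ (1 - t) := Real.rpow_le_rpow zero_le_one hx1 (by linarith)
      exact mul_nonneg (by linarith) (by linarith)
    · have h1t : x ^ t ≤ 1 := by
        calc x ^ t ≤ 1 ^ t := Real.rpow_le_rpow hx.le hx1 h0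
          _ = 1 := Real.one_rpow t
      have h2t : x ^ (1 - t) ≤ 1 := by
        calc x ^ (1 - t) ≤ 1 ^ (1 - t) := Real.rpow_le_rpow hx.le hx1 (by linarith)
          _ = 1 := Real.one_rpow _
      have : (x ^ t - 1) * (x ^ (1 - t) - 1) = (1 - x ^ t) * (1 - x ^ (1 - t)) := by ring
      rw [this]
      exact mul_nonneg (by linarith) (by linarith)
  nlinarith [hkey, hmul]

lemma det_conj_diag {n : ℕ} (W : Matrix.unitaryGroup (Fin n) ℂ) (v : Fin n → ℝ) :
    ((W : Matrix (Fin n) (Fin n) ℂ) * Matrix.diagonal (fun i => ((v i : ℝ) : ℂ)) *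
      (star W : Matrix (Fin n) (Fin n) ℂ)).det = ((∏ i, v i : ℝ) : ℂ) := by
  rw [det_mul, det_mul, det_diagonal]
  have h1 : (W : Matrix (Fin n) (Fin n) ℂ).det *
      ((star W : Matrix (Fin n) (Fin n) ℂ)).det = 1 := by
    rw [← det_mul, mem_unitaryGroup_iff.mp W.2, det_one]
  rw [mul_comm ((W : Matrix (Fin n) (Fin n) ℂ).det) (∏ i, ((v i : ℝ) : ℂ)),
    mul_assoc, h1, mul_one]
  exact (Complex.ofReal_prod _ _).symm

lemma phi_add {n : ℕ} (S W : Matrix (Fin n) (Fin n) ℂ) (W' : Matrix (Fin n) (Fin n) ℂ)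
    (v w : Fin n → ℝ) :
    S * (W * Matrix.diagonal (fun i => ((v i : ℝ) : ℂ)) * W') * S
      + S * (W * Matrix.diagonal (fun i => ((w i : ℝ) : ℂ)) * W') * S
      = S * (W * Matrix.diagonal (fun i => ((v i + w i : ℝ) : ℂ)) * W') * S := by
  have hd : Matrix.diagonal (fun i => ((v i + w i : ℝ) : ℂ))
      = Matrix.diagonal (fun i => ((v i : ℝ) : ℂ))
        + Matrix.diagonal (fun i => ((w i : ℝ) : ℂ)) := by
    ext i j
    simp only [Matrix.add_apply, Matrix.diagonal_apply]
    split_ifs with hij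
    · push_cast; ring
    · simp
  rw [hd]
  simp only [Matrix.mul_add, Matrix.add_mul]

lemma phi_sub {n : ℕ} (S W : Matrix (Fin n) (Fin n) ℂ) (W' : Matrix (Fin n) (Fin n) ℂ)
    (v w : Fin n → ℝ) :
    S * (W * Matrix.diagonal (fun i => ((v i : ℝ) : ℂ)) * W') * S
      - S * (W * Matrix.diagonal (fun i => ((w i : ℝ) : ℂ)) * W') * S
      = S * (W * Matrix.diagonal (fun i => ((v i - w i : ℝ) : ℂ)) * W') * S := by
  have hd : Matrix.diagonal (fun i => ((v i - w i : ℝ) : ℂ))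
      = Matrix.diagonal (fun i => ((v i : ℝ) : ℂ))
        - Matrix.diagonal (fun i => ((w i : ℝ) : ℂ)) := by
    ext i j
    simp only [Matrix.sub_apply, Matrix.diagonal_apply]
    split_ifs with hij
    · push_cast; ring
    · simp
  rw [hd]
  simp only [Matrix.mul_sub, Matrix.sub_mul]

end aux2
lemma scalar_bound {x : ℝ} (hx : 0 < x) {τ ν : ℝ} (hτ : τ ∈ Set.Ioo (0:ℝ) 1)
    (hν : ν ∈ Set.Ioo (0:ℝ) 1) (hsq : (1 - 2*τ)^2 ≤ (1 - 2*ν)^2) :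
    (x ^ ν + x ^ (1-ν)) + ν * (1-ν) / (τ * (1-τ)) * (1 + x - (x ^ τ + x ^ (1-τ)))
      ≤ 1 + x := by
  have hd : 0 < τ * (1-τ) := by nlinarith [hτ.1, hτ.2]
  have hmulτ : x ^ τ * x ^ (1-τ) = x := by rw [← Real.rpow_add hx]; norm_num
  have hmulν : x ^ ν * x ^ (1-ν) = x := by rw [← Real.rpow_add hx]; norm_num
  have hfτ : (x ^ τ - 1) * (x ^ (1-τ) - 1) = 1 + x - (x ^ τ + x ^ (1-τ)) := by
    linear_combination hmulτ
  have hfν : (x ^ ν - 1) * (x ^ (1-ν) - 1) = 1 + x - (x ^ ν + x ^ (1-ν)) := by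
    linear_combination hmulν
  have h2 : ν * (1-ν) / (τ * (1-τ)) * (1 + x - (x ^ τ + x ^ (1-τ)))
      ≤ 1 + x - (x ^ ν + x ^ (1-ν)) := by
    rw [← hfτ, ← hfν, div_mul_eq_mul_div, div_le_iff₀ hd]
    calc ν * (1-ν) * ((x ^ τ - 1) * (x ^ (1-τ) - 1))
        ≤ τ * (1-τ) * ((x ^ ν - 1) * (x ^ (1-ν) - 1)) := scalar_heinz hx hτ hν hsq
      _ = (x ^ ν - 1) * (x ^ (1-ν) - 1) * (τ * (1-τ)) := by ring
  linarith

lemma final_real {n : ℕ} (hn : 0 < n) (dA : ℝ) (hdA : 0 < dA) (lam : Fin n → ℝ)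
    (hlam : ∀ i, 0 < lam i) {τ ν : ℝ} (hτ : τ ∈ Set.Ioo (0:ℝ) 1)
    (hν : ν ∈ Set.Ioo (0:ℝ) 1) (hsq : (1 - 2*τ)^2 ≤ (1 - 2*ν)^2) :
    (dA * ∏ i, (lam i ^ ν + lam i ^ (1-ν))) ^ ((1:ℝ)/n)
      + ν * (1-ν) / (τ * (1-τ))
        * (dA * ∏ i, (1 + lam i - (lam i ^ τ + lam i ^ (1-τ)))) ^ ((1:ℝ)/n)
      ≤ (dA * ∏ i, (1 + lam i)) ^ ((1:ℝ)/n) := by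
  have hn' : (0:ℝ) < n := by exact_mod_cast hn
  set c := ν * (1-ν) / (τ * (1-τ)) with hcdef
  have hc : 0 < c := by
    apply div_pos
    · nlinarith [hν.1, hν.2]
    · nlinarith [hτ.1, hτ.2]
  set g := fun i => lam i ^ ν + lam i ^ (1-ν) with hgdef
  set h := fun i => 1 + lam i - (lam i ^ τ + lam i ^ (1-τ)) with hhdef
  have hg0 : ∀ i, 0 ≤ g i := fun i =>
    add_nonneg (Real.rpow_nonneg (hlam i).le _) (Real.rpow_nonneg (hlam i).le _)
  have hh0 : ∀ i, 0 ≤ h i := fun i => f_nonneg (hlam i) hτ.1.le hτ.2.le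
  have hPg : 0 ≤ ∏ i, g i := Finset.prod_nonneg fun i _ => hg0 i
  have hPh : 0 ≤ ∏ i, h i := Finset.prod_nonneg fun i _ => hh0 i
  rw [Real.mul_rpow hdA.le hPg, Real.mul_rpow hdA.le hPh,
    Real.mul_rpow hdA.le (Finset.prod_nonneg fun i _ => add_nonneg zero_le_one (hlam i).le)]
  have ec : c * (∏ i, h i) ^ ((1:ℝ)/n) = (∏ i, (c * h i)) ^ ((1:ℝ)/n) := by
    rw [show (∏ i, (c * h i)) = c ^ (n:ℕ) * ∏ i, h i from by
      rw [Finset.prod_mul_distrib, Finset.prod_const, Finset.card_univ, Fintype.card_fin]]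
    rw [Real.mul_rpow (pow_nonneg hc.le _) hPh]
    congr 1
    rw [← Real.rpow_natCast c n, ← Real.rpow_mul hc.le,
      mul_one_div_cancel hn'.ne', Real.rpow_one]
  calc dA ^ ((1:ℝ)/n) * (∏ i, g i) ^ ((1:ℝ)/n)
        + c * (dA ^ ((1:ℝ)/n) * (∏ i, h i) ^ ((1:ℝ)/n))
      = dA ^ ((1:ℝ)/n) * ((∏ i, g i) ^ ((1:ℝ)/n) + c * (∏ i, h i) ^ ((1:ℝ)/n)) := by ring
    _ = dA ^ ((1:ℝ)/n) * ((∏ i, g i) ^ ((1:ℝ)/n) + (∏ i, (c * h i)) ^ ((1:ℝ)/n)) := by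
        rw [ec]
    _ ≤ dA ^ ((1:ℝ)/n) * (∏ i, (g i + c * h i)) ^ ((1:ℝ)/n) := by
        refine mul_le_mul_of_nonneg_left ?_ (Real.rpow_nonneg hdA.le _)
        exact geom_superadd hn g (fun i => c * h i) hg0
          (fun i => mul_nonneg hc.le (hh0 i))
    _ ≤ dA ^ ((1:ℝ)/n) * (∏ i, (1 + lam i)) ^ ((1:ℝ)/n) := by
        refine mul_le_mul_of_nonneg_left ?_ (Real.rpow_nonneg hdA.le _)
        refine Real.rpow_le_rpow (Finset.prod_nonneg fun i _ =>
          add_nonneg (hg0 i) (mul_nonneg hc.le (hh0 i))) ?_ (by positivity)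
        refine Finset.prod_le_prod (fun i _ =>
          add_nonneg (hg0 i) (mul_nonneg hc.le (hh0 i))) (fun i _ => ?_)
        exact scalar_bound (hlam i) hτ hν hsq
    _ = dA ^ ((1:ℝ)/n) * (∏ i, (1 + lam i)) ^ ((1:ℝ)/n) := by rfl

end AuxiliaryLemmas

theorem determinant_quadratic_heinz {n : ℕ} (hn : 0 < n)
    (A B : Matrix (Fin n) (Fin n) ℂ) (hA : A.PosDef) (hB : B.PosDef)
    (τ ν : ℝ) (hτ : τ ∈ Set.Ioo (0:ℝ) 1) (hν : ν ∈ Set.Ioo (0:ℝ) 1)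
    (h : ν ≤ min τ (1 - τ) ∨ max τ (1 - τ) ≤ ν) :
    ((geoMean A B ν + geoMean A B (1 - ν)).det.re) ^ ((1:ℝ)/n)
      + (ν * (1 - ν) / (τ * (1 - τ))) *
        ((A + B - (geoMean A B τ + geoMean A B (1 - τ))).det.re) ^ ((1:ℝ)/n)
      ≤ ((A + B).det.re) ^ ((1:ℝ)/n) := by
  have hAh : A.IsHermitian := hA.1
  have hsq : (1 - 2*τ)^2 ≤ (1 - 2*ν)^2 := sq_cond hτ hν h
  set S := mpow A (1/2) with hSdef
  set T := mpow A (-(1/2)) with hTdef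
  have hST : S * T = 1 := by
    rw [hSdef, hTdef, mpow_mul_mpow hA, show (1/2 + -(1/2) : ℝ) = 0 by norm_num,
      mpow_zero hAh]
  have hTS : T * S = 1 := by
    rw [hSdef, hTdef, mpow_mul_mpow hA, show (-(1/2) + 1/2 : ℝ) = 0 by norm_num,
      mpow_zero hAh]
  have hSS : S * S = A := by
    rw [hSdef, mpow_mul_mpow hA, show (1/2 + 1/2 : ℝ) = 1 by norm_num, mpow_one hAh]
  set C := T * B * T with hCdef
  have hTh : T.IsHermitian := mpow_isHermitian hAh _
  have hTu : IsUnit T := ⟨⟨T, S, hTS, hST⟩, rfl⟩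
  have hCpd : C.PosDef := by
    have h' : C = Tᴴ * B * T := by rw [hCdef, hTh]
    rw [h']; exact posDef_conj hB hTu
  have hCh : C.IsHermitian := hCpd.1
  set W := (hCh.eigenvectorUnitary : Matrix (Fin n) (Fin n) ℂ) with hWdef
  set lam := hCh.eigenvalues with hlamdef
  have hlam : ∀ i, 0 < lam i := fun i => hCpd.eigenvalues_pos i
  -- the three matrices as congruences of diagonal matrices
  have hmpowC : ∀ t : ℝ, mpow C t
      = W * Matrix.diagonal (fun i => ((lam i ^ t : ℝ) : ℂ)) * star W := by
    intro t
    exact mpow_eq hCh t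
  have hgeo : ∀ t : ℝ, geoMean A B t
      = S * (W * Matrix.diagonal (fun i => ((lam i ^ t : ℝ) : ℂ)) * star W) * S := by
    intro t
    show S * mpow C t * S = _
    rw [hmpowC t]
  have hBSC : B = S * C * S := by
    rw [hCdef]
    simp only [← mul_assoc]
    rw [hST, one_mul, mul_assoc, hTS, mul_one]
  have hCspec : C = W * Matrix.diagonal (fun i => ((lam i : ℝ) : ℂ)) * star W := by
    exact hCh.spectral_theorem
  have hW1 : W * star W = 1 := mem_unitaryGroup_iff.mp hCh.eigenvectorUnitary.2
  have hAphi : A = S * (W * Matrix.diagonal (fun i => ((1:ℝ) : ℂ)) * star W) * S := by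
    rw [show Matrix.diagonal (fun _ : Fin n => ((1:ℝ) : ℂ)) = 1 by simp, mul_one, hW1,
      mul_one, hSS]
  have EAB : A + B = S * (W * Matrix.diagonal (fun i => ((1 + lam i : ℝ) : ℂ)) * star W) * S := by
    rw [hAphi]
    nth_rewrite 1 [hBSC, hCspec]
    exact phi_add S W (star W) (fun _ => 1) lam
  have EGν : geoMean A B ν + geoMean A B (1 - ν)
      = S * (W * Matrix.diagonal (fun i => ((lam i ^ ν + lam i ^ (1 - ν) : ℝ) : ℂ)) * star W) * S := by
    rw [hgeo ν, hgeo (1 - ν)]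
    exact phi_add S W (star W) _ _
  have EGτ : geoMean A B τ + geoMean A B (1 - τ)
      = S * (W * Matrix.diagonal (fun i => ((lam i ^ τ + lam i ^ (1 - τ) : ℝ) : ℂ)) * star W) * S := by
    rw [hgeo τ, hgeo (1 - τ)]
    exact phi_add S W (star W) _ _
  have ET : A + B - (geoMean A B τ + geoMean A B (1 - τ))
      = S * (W * Matrix.diagonal
          (fun i => ((1 + lam i - (lam i ^ τ + lam i ^ (1 - τ)) : ℝ) : ℂ)) * star W) * S := by
    rw [EAB, EGτ]
    exact phi_sub S W (star W) _ _
  -- determinants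
  have hdet0 := hA.det_pos
  rw [Complex.lt_def] at hdet0
  simp only [Complex.zero_re, Complex.zero_im] at hdet0
  have hdA : A.det = ((A.det.re : ℝ) : ℂ) := by
    apply Complex.ext
    · simp
    · simp [← hdet0.2]
  have hdetphi : ∀ v : Fin n → ℝ,
      (S * (W * Matrix.diagonal (fun i => ((v i : ℝ) : ℂ)) * star W) * S).det.re
        = A.det.re * ∏ i, v i := by
    intro v
    have h1 : (S * (W * Matrix.diagonal (fun i => ((v i : ℝ) : ℂ)) * star W) * S).det
        = A.det * ((∏ i, v i : ℝ) : ℂ) := by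
      rw [det_mul, det_mul, det_conj_diag hCh.eigenvectorUnitary v, ← hSS, det_mul]
      ring
    rw [h1, hdA, ← Complex.ofReal_mul, Complex.ofReal_re]
    simp
  rw [EGν, ET, EAB, hdetphi, hdetphi, hdetphi]
  exact final_real hn A.det.re hdet0.1 lam hlam hτ hν hsq
end
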